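/- Let n ≥ 1, let z₁,…,zₙ be pairwise distinct complex numbers, and let (s_{ab}) be complex numbers for 1 ≤ a,b ≤ n satisfying s_{ab} = s_{ba}, s_{aa} = 0, and ∑_{b=1}^{n} s_{ab} = 0 for every a. Define ℰ_a = ∑_{b ≠ a} s_{ab}/(z_a − z_b). Then the three relations hold: ∑_{a=1}^{n} ℰ_a = 0, ∑_{a=1}^{n} z_a ℰ_a = 0, and ∑_{a=1}^{n} z_a² ℰ_a = 0. -/
import Mathlib

lemma swap_offdiag_sum {n : ℕ} (F : Fin n → Fin n → ℂ) :
    ∑ a, ∑ b ∈ Finset.univ.erase a, F a b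
      = ∑ a, ∑ b ∈ Finset.univ.erase a, F b a := by
  rw [Finset.sum_comm' (s := Finset.univ) (t := fun a => Finset.univ.erase a)
    (t' := Finset.univ) (s' := fun b => Finset.univ.erase b)]
  intro x y
  simp [Finset.mem_erase, ne_comm]

/-- The three `SL(2,ℂ)` relations among the scattering equations: with
pairwise distinct `z_a` and Mandelstam data `s_ab` satisfying symmetry,
vanishing diagonal and vanishing row sums, the functions
`ℰ_a = ∑_{b ≠ a} s_ab / (z_a − z_b)` satisfy
`∑ ℰ_a = 0`, `∑ z_a ℰ_a = 0` and `∑ z_a² ℰ_a = 0`. -/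
theorem scattering_equations_relations
    (n : ℕ) (hn : 1 ≤ n)
    (z : Fin n → ℂ) (hz : Function.Injective z)
    (s : Fin n → Fin n → ℂ)
    (hsymm : ∀ a b, s a b = s b a)
    (hdiag : ∀ a, s a a = 0)
    (hrow : ∀ a, ∑ b, s a b = 0)
    (E : Fin n → ℂ)
    (hE : ∀ a, E a = ∑ b ∈ Finset.univ.erase a, s a b / (z a - z b)) :
    (∑ a, E a = 0) ∧ (∑ a, z a * E a = 0) ∧ (∑ a, (z a) ^ 2 * E a = 0) := by
  have hzne : ∀ a b : Fin n, a ≠ b → z a - z b ≠ 0 := by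
    intro a b hab h
    exact hab (hz (sub_eq_zero.mp h))
  have hrowerase : ∀ a : Fin n, ∑ b ∈ Finset.univ.erase a, s a b = 0 := by
    intro a
    rw [Finset.sum_erase_eq_sub (Finset.mem_univ a), hrow, hdiag, sub_zero]
  refine ⟨?_, ?_, ?_⟩
  · -- ∑ E = 0
    have key : (∑ a, E a) + (∑ a, E a) = 0 := by
      simp only [hE]
      nth_rewrite 2 [swap_offdiag_sum (fun a b => s a b / (z a - z b))]
      rw [← Finset.sum_add_distrib]
      rw [Finset.sum_congr rfl (fun a _ => (Finset.sum_add_distrib).symm)]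
      apply Finset.sum_eq_zero
      intro a _
      apply Finset.sum_eq_zero
      intro b hb
      have hab : a ≠ b := (Finset.ne_of_mem_erase hb).symm
      have h1 := hzne a b hab
      have h2 := hzne b a hab.symm
      rw [hsymm b a]
      field_simp
      ring
    linear_combination key / 2
  · -- ∑ z E = 0
    have key : (∑ a, z a * E a) + (∑ a, z a * E a) = 0 := by
      simp only [hE, Finset.mul_sum]
      nth_rewrite 2 [swap_offdiag_sum (fun a b => z a * (s a b / (z a - z b)))]
      rw [← Finset.sum_add_distrib]
      rw [Finset.sum_congr rfl (fun a _ => (Finset.sum_add_distrib).symm)]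
      have : ∀ a ∈ Finset.univ, ∑ b ∈ Finset.univ.erase a,
          (z a * (s a b / (z a - z b)) + z b * (s b a / (z b - z a))) = 0 := by
        intro a _
        have : ∀ b ∈ Finset.univ.erase a,
            z a * (s a b / (z a - z b)) + z b * (s b a / (z b - z a)) = s a b := by
          intro b hb
          have hab : a ≠ b := (Finset.ne_of_mem_erase hb).symm
          have h1 := hzne a b hab
          have h2 := hzne b a hab.symm
          rw [hsymm b a]
          field_simp
          ring
        rw [Finset.sum_congr rfl this, hrowerase]
      rw [Finset.sum_congr rfl this, Finset.sum_const, smul_zero]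
    linear_combination key / 2
  · -- ∑ z² E = 0
    have key : (∑ a, z a ^ 2 * E a) + (∑ a, z a ^ 2 * E a)
        = ∑ a, ∑ b ∈ Finset.univ.erase a, (s a b * z a + s a b * z b) := by
      simp only [hE, Finset.mul_sum]
      nth_rewrite 2 [swap_offdiag_sum (fun a b => z a ^ 2 * (s a b / (z a - z b)))]
      rw [← Finset.sum_add_distrib]
      rw [Finset.sum_congr rfl (fun a _ => (Finset.sum_add_distrib).symm)]
      apply Finset.sum_congr rfl
      intro a _
      apply Finset.sum_congr rfl
      intro b hb
      have hab : a ≠ b := (Finset.ne_of_mem_erase hb).symm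
      have h1 := hzne a b hab
      have h2 := hzne b a hab.symm
      rw [hsymm b a]
      field_simp
      ring
    have hA : ∑ a, ∑ b ∈ Finset.univ.erase a, s a b * z a = 0 := by
      apply Finset.sum_eq_zero
      intro a _
      rw [← Finset.sum_mul, hrowerase, zero_mul]
    have hB : ∑ a, ∑ b ∈ Finset.univ.erase a, s a b * z b = 0 := by
      rw [swap_offdiag_sum (fun a b => s a b * z b)]
      apply Finset.sum_eq_zero
      intro a _
      have : ∀ b ∈ Finset.univ.erase a, s b a * z a = s a b * z a := by
        intro b _
        rw [hsymm b a]
      rw [Finset.sum_congr rfl this, ← Finset.sum_mul, hrowerase, zero_mul]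
    rw [← Finset.sum_add_distrib] at key
    simp only [Finset.sum_add_distrib] at key
    rw [hA, hB, add_zero] at key
    linear_combination key / 2
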